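/- (One gradient-descent step is equivariant under re-arrangement of the signal.) In the setting where L_y is differentiable on E = EuclideanSpace ℝ (Fin p) × (Fin N → EuclideanSpace ℝ (Fin d)), fix a learning rate η > 0 and define the gradient-descent update G_y(θ, H) = (θ, H) − η • grad L_y(θ, H). Then for every permutation σ : Fin N ≃ Fin N and every (θ, H), writing G_y(θ, H) = (θ⁺, H⁺), one has G_{y∘σ}(θ, H∘σ) = (θ⁺, H⁺∘σ). -/

import Mathlib

noncomputable section

/-- The product Hilbert space `E` of network parameters and hash tables. -/
abbrev DinerParamSpace (p N d : ℕ) :=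
  WithLp 2 ((EuclideanSpace ℝ (Fin p)) × (PiLp 2 fun _ : Fin N => EuclideanSpace ℝ (Fin d)))

/-- The DINER loss as a function on the product Hilbert space. -/
def dinerLossE {N p d m : ℕ}
    (f : EuclideanSpace ℝ (Fin p) → EuclideanSpace ℝ (Fin d) → (Fin m → ℝ))
    (ℓ : (Fin m → ℝ) → (Fin m → ℝ) → ℝ)
    (y : Fin N → (Fin m → ℝ)) (x : DinerParamSpace p N d) : ℝ :=
  ∑ i : Fin N, ℓ (f x.fst (x.snd i)) (y i)

/-- One gradient-descent step with learning rate `η` for the DINER loss. -/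
def dinerGradStep {N p d m : ℕ}
    (f : EuclideanSpace ℝ (Fin p) → EuclideanSpace ℝ (Fin d) → (Fin m → ℝ))
    (ℓ : (Fin m → ℝ) → (Fin m → ℝ) → ℝ)
    (y : Fin N → (Fin m → ℝ)) (η : ℝ)
    (x : DinerParamSpace p N d) : DinerParamSpace p N d :=
  x - η • gradient (dinerLossE f ℓ y) x


/-- Permutation of the hash-table slots as a continuous linear map on `E`. -/
def permCLM {p N d : ℕ} (e : Equiv.Perm (Fin N)) :
    DinerParamSpace p N d →L[ℝ] DinerParamSpace p N d where
  toFun := fun x => WithLp.toLp 2 (x.fst, WithLp.toLp 2 (fun i => x.snd (e i)))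
  map_add' := fun x y => rfl
  map_smul' := fun c x => rfl
  cont := by
    let Φ := WithLp.prodContinuousLinearEquiv 2 ℝ
      (EuclideanSpace ℝ (Fin p)) (PiLp 2 fun _ : Fin N => EuclideanSpace ℝ (Fin d))
    exact Φ.symm.continuous.comp ((continuous_fst.comp Φ.continuous).prodMk
      (((LinearIsometryEquiv.piLpCongrLeft 2 ℝ (EuclideanSpace ℝ (Fin d)) e.symm).continuous).comp
        (continuous_snd.comp Φ.continuous)))

/-- The evaluation map `x ↦ (x.1, x.2 i)` as a continuous linear map. -/
def evalCLM {p N d : ℕ} (i : Fin N) :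
    DinerParamSpace p N d →L[ℝ] (EuclideanSpace ℝ (Fin p)) × (EuclideanSpace ℝ (Fin d)) :=
  ((ContinuousLinearMap.fst ℝ _ _).prod
    ((PiLp.proj 2 (fun _ : Fin N => EuclideanSpace ℝ (Fin d)) i).comp
      (ContinuousLinearMap.snd ℝ _ _))).comp
    (WithLp.prodContinuousLinearEquiv 2 ℝ _ _).toContinuousLinearMap

lemma dinerLossE_differentiable {N p d m : ℕ}
    (f : EuclideanSpace ℝ (Fin p) → EuclideanSpace ℝ (Fin d) → (Fin m → ℝ))
    (ℓ : (Fin m → ℝ) → (Fin m → ℝ) → ℝ)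
    (y : Fin N → (Fin m → ℝ))
    (hdiff : ∀ i : Fin N,
      Differentiable ℝ (fun q : (EuclideanSpace ℝ (Fin p)) × (EuclideanSpace ℝ (Fin d)) =>
        ℓ (f q.1 q.2) (y i))) :
    Differentiable ℝ (dinerLossE f ℓ y) := by
  have : ∀ i : Fin N, Differentiable ℝ
      (fun x : DinerParamSpace p N d => ℓ (f x.fst (x.snd i)) (y i)) := by
    intro i
    exact (hdiff i).comp (evalCLM (p := p) (d := d) i).differentiable
  exact Differentiable.fun_sum (fun i _ => this i)

lemma inner_permCLM {p N d : ℕ} (e : Equiv.Perm (Fin N))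
    (w v : DinerParamSpace p N d) :
    (inner ℝ (permCLM e w) v : ℝ) = inner ℝ w (permCLM e.symm v) := by
  simp only [permCLM, ContinuousLinearMap.coe_mk', LinearMap.coe_mk, AddHom.coe_mk,
    WithLp.prod_inner_apply]
  congr 1
  show ∑ i, (inner ℝ (w.snd (e i)) (v.snd i) : ℝ) = ∑ i, (inner ℝ (w.snd i) (v.snd (e.symm i)) : ℝ)
  rw [← Equiv.sum_comp e (fun j => (inner ℝ (w.snd j) (v.snd (e.symm j)) : ℝ))]
  exact Finset.sum_congr rfl fun i _ => by rw [Equiv.symm_apply_apply]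

lemma gradient_dinerLossE_perm {N p d m : ℕ}
    (f : EuclideanSpace ℝ (Fin p) → EuclideanSpace ℝ (Fin d) → (Fin m → ℝ))
    (ℓ : (Fin m → ℝ) → (Fin m → ℝ) → ℝ)
    (y : Fin N → (Fin m → ℝ))
    (hdiff : ∀ i : Fin N,
      Differentiable ℝ (fun q : (EuclideanSpace ℝ (Fin p)) × (EuclideanSpace ℝ (Fin d)) =>
        ℓ (f q.1 q.2) (y i)))
    (σ : Equiv.Perm (Fin N)) (x : DinerParamSpace p N d) :
    gradient (dinerLossE f ℓ (y ∘ σ)) x =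
      permCLM σ (gradient (dinerLossE f ℓ y) (permCLM σ.symm x)) := by
  have hL := dinerLossE_differentiable f ℓ y hdiff
  have hcomp : dinerLossE f ℓ (y ∘ σ) = (dinerLossE f ℓ y) ∘ (permCLM σ.symm) := by
    funext z
    simp only [dinerLossE, Function.comp]
    rw [← Equiv.sum_comp σ
      (fun i => ℓ (f ((permCLM σ.symm z).fst) ((permCLM σ.symm z).snd i)) (y i))]
    refine Finset.sum_congr rfl fun i _ => ?_
    show ℓ (f z.fst (z.snd i)) (y (σ i)) = ℓ (f z.fst (z.snd (σ.symm (σ i)))) (y (σ i))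
    rw [Equiv.symm_apply_apply]
  set w := gradient (dinerLossE f ℓ y) (permCLM σ.symm x) with hw
  have h2 : HasFDerivAt (dinerLossE f ℓ y) (InnerProductSpace.toDual ℝ _ w)
      (permCLM σ.symm x) := ((hL _).hasGradientAt).hasFDerivAt
  have h3 : HasFDerivAt ((dinerLossE f ℓ y) ∘ (permCLM σ.symm))
      ((InnerProductSpace.toDual ℝ _ w).comp (permCLM σ.symm)) x :=
    h2.comp x (permCLM σ.symm).hasFDerivAt
  have h4 : (InnerProductSpace.toDual ℝ _ w).comp (permCLM σ.symm) =
      InnerProductSpace.toDual ℝ _ (permCLM σ w) := by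
    ext v
    simp only [ContinuousLinearMap.comp_apply, InnerProductSpace.toDual_apply_apply]
    exact (inner_permCLM σ w v).symm
  rw [h4] at h3
  rw [hcomp]
  exact (hasGradientAt_iff_hasFDerivAt.mpr h3).gradient

/-- One gradient-descent step is equivariant under re-arrangement of the signal:
if `G_y (θ, H) = (θ⁺, H⁺)` then `G_{y∘σ} (θ, H∘σ) = (θ⁺, H⁺∘σ)`. -/
theorem dinerGradStep_comp_perm {N p d m : ℕ}
    (f : EuclideanSpace ℝ (Fin p) → EuclideanSpace ℝ (Fin d) → (Fin m → ℝ))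
    (ℓ : (Fin m → ℝ) → (Fin m → ℝ) → ℝ)
    (y : Fin N → (Fin m → ℝ))
    (hdiff : ∀ i : Fin N,
      Differentiable ℝ (fun q : (EuclideanSpace ℝ (Fin p)) × (EuclideanSpace ℝ (Fin d)) =>
        ℓ (f q.1 q.2) (y i)))
    (η : ℝ) (hη : 0 < η)
    (σ : Equiv.Perm (Fin N))
    (θ : EuclideanSpace ℝ (Fin p))
    (H : PiLp 2 fun _ : Fin N => EuclideanSpace ℝ (Fin d)) :
    dinerGradStep f ℓ (y ∘ σ) η (WithLp.toLp 2 (θ, WithLp.toLp 2 (fun i => H (σ i))) : DinerParamSpace p N d) =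
      WithLp.toLp 2 ((dinerGradStep f ℓ y η (WithLp.toLp 2 (θ, H) : DinerParamSpace p N d)).fst,
        WithLp.toLp 2 (fun i => (dinerGradStep f ℓ y η (WithLp.toLp 2 (θ, H) : DinerParamSpace p N d)).snd (σ i))) := by
  have hfix : permCLM σ.symm (WithLp.toLp 2 (θ, WithLp.toLp 2 (fun i => H (σ i))) : DinerParamSpace p N d) =
      (WithLp.toLp 2 (θ, H) : DinerParamSpace p N d) := by
    refine congrArg (WithLp.toLp 2) (Prod.ext rfl ?_)
    refine congrArg (WithLp.toLp 2) ?_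
    funext i
    show H (σ (σ.symm i)) = H i
    rw [Equiv.apply_symm_apply]
  have hgrad : gradient (dinerLossE f ℓ (y ∘ σ))
        (WithLp.toLp 2 (θ, WithLp.toLp 2 (fun i => H (σ i))) : DinerParamSpace p N d) =
      permCLM σ (gradient (dinerLossE f ℓ y) (WithLp.toLp 2 (θ, H) : DinerParamSpace p N d)) := by
    rw [gradient_dinerLossE_perm f ℓ y hdiff σ, hfix]
  unfold dinerGradStep
  rw [hgrad]
  rfl
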